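/- Let C ∈ ℝ^{n×n} be symmetric, β ∈ [0,1), and V ∈ ℝ^{k×n} feasible, with a well-defined pass of Mixing Method++ from V. For i ∈ {1,…,n+1} let Z_i(V) denote the partially updated matrix with columns v̂_1,…,v̂_{i−1}, v_i,…,v_n. Then for every i ∈ {1,…,n}, f(Z_{i+1}(V)) ≤ f(Z_i(V)); in particular f(Z_i(V)) ≤ f(V) for every i. -/

import Mathlib

open Matrix Finset
open scoped BigOperators RealInnerProductSpace

/-- The SDP objective `f(W) = trace(C Wᵀ W) = ∑ i j, C i j ⟨w_i, w_j⟩`, expressed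
in terms of the columns `w_1, …, w_n` of `W`. -/
noncomputable def obj {n k : ℕ} (C : Matrix (Fin n) (Fin n) ℝ)
    (V : Fin n → EuclideanSpace ℝ (Fin k)) : ℝ :=
  ∑ i, ∑ j, C i j * ⟪V i, V j⟫

/-- Auxiliary: changing one column of `W` (keeping its squared norm) changes the
objective by twice the inner product of the column change with the weighted sum of the
other (old) columns. -/
lemma obj_diff {n k : ℕ} (C : Matrix (Fin n) (Fin n) ℝ) (hC : C.IsSymm)
    (X Y : Fin n → EuclideanSpace ℝ (Fin k)) (i₀ : Fin n)
    (hXY : ∀ j, j ≠ i₀ → X j = Y j)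
    (hnorm : ⟪X i₀, X i₀⟫ = ⟪Y i₀, Y i₀⟫) :
    obj C X = obj C Y +
      2 * ⟪X i₀ - Y i₀, ∑ j ∈ Finset.univ.filter (fun j => j ≠ i₀), C i₀ j • Y j⟫ := by
  have hsym : ∀ i j, C i j = C j i := fun i j => hC.apply j i
  set d := X i₀ - Y i₀ with hd
  have expand : ∀ i j : Fin n, C i j * ⟪X i, X j⟫ =
      C i j * ⟪Y i, Y j⟫ + ((if i = i₀ then C i j * ⟪d, X j⟫ else 0) +
        (if j = i₀ then C i j * ⟪Y i, d⟫ else 0)) := by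
    intro i j
    by_cases hi : i = i₀ <;> by_cases hj : j = i₀
    · subst hi; subst hj; simp [hd, inner_sub_left, inner_sub_right]; ring
    · subst hi; rw [hXY j hj]; simp [hj, hd, inner_sub_left]; ring
    · subst hj; rw [hXY i hi]; simp [hi, hd, inner_sub_right]; ring
    · rw [hXY i hi, hXY j hj]; simp [hi, hj]
  have h1 : obj C X = obj C Y + ((∑ j, C i₀ j * ⟪d, X j⟫) + ∑ i, C i i₀ * ⟪Y i, d⟫) := by
    unfold obj
    rw [Finset.sum_congr rfl (fun i _ => Finset.sum_congr rfl (fun j _ => expand i j))]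
    rw [Finset.sum_congr rfl (fun i _ => Finset.sum_add_distrib),
        Finset.sum_add_distrib]
    congr 1
    rw [Finset.sum_congr rfl (fun i _ => Finset.sum_add_distrib), Finset.sum_add_distrib]
    congr 1
    · rw [Finset.sum_comm]
      simp
    · simp
  rw [h1]
  congr 1
  have split1 : (∑ j, C i₀ j * ⟪d, X j⟫) =
      C i₀ i₀ * ⟪d, X i₀⟫ + ∑ j ∈ Finset.univ.filter (fun j => j ≠ i₀), C i₀ j * ⟪d, Y j⟫ := by
    rw [← Finset.sum_filter_add_sum_filter_not Finset.univ (fun j => j = i₀)]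
    congr 1
    · rw [Finset.filter_eq']; simp
    · exact Finset.sum_congr rfl (fun j hj => by
        rw [hXY j (by simpa using hj)])
  have split2 : (∑ i, C i i₀ * ⟪Y i, d⟫) =
      C i₀ i₀ * ⟪Y i₀, d⟫ + ∑ j ∈ Finset.univ.filter (fun j => j ≠ i₀), C i₀ j * ⟪d, Y j⟫ := by
    rw [← Finset.sum_filter_add_sum_filter_not Finset.univ (fun j => j = i₀)]
    congr 1
    · rw [Finset.filter_eq']; simp
    · exact Finset.sum_congr rfl (fun j hj => by
        rw [← hsym, real_inner_comm])
  have hzero : ⟪d, X i₀⟫ + ⟪Y i₀, d⟫ = 0 := by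
    simp only [hd, inner_sub_left, inner_sub_right]
    have := real_inner_comm (X i₀) (Y i₀)
    linarith [hnorm]
  have hrhs : ⟪d, ∑ j ∈ Finset.univ.filter (fun j => j ≠ i₀), C i₀ j • Y j⟫ =
      ∑ j ∈ Finset.univ.filter (fun j => j ≠ i₀), C i₀ j * ⟪d, Y j⟫ := by
    rw [inner_sum]
    exact Finset.sum_congr rfl (fun j _ => real_inner_smul_right _ _ _)
  rw [split1, split2, hrhs]
  have h0 : C i₀ i₀ * ⟪d, X i₀⟫ + C i₀ i₀ * ⟪Y i₀, d⟫ = 0 := by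
    rw [← mul_add, hzero, mul_zero]
  linarith

/-- Along the inner loop of one well-defined pass of Mixing Method++, the objective is
non-increasing on the partially updated matrices `Z_t` (here 0-indexed: `Z t` has columns
`v̂_j` for `j < t` and `v_j` for `j ≥ t`, so `Z 0 = V` and `Z n = V̂`). -/
theorem mixing_pp_inner_loop_monotone {n k : ℕ} (C : Matrix (Fin n) (Fin n) ℝ)
    (hC : C.IsSymm)
    (β : ℝ) (hβ0 : 0 ≤ β) (hβ1 : β < 1)
    (V Vh g u : Fin n → EuclideanSpace ℝ (Fin k)) (y w : Fin n → ℝ)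
    (hV : ∀ i, ‖V i‖ = 1)
    (hg : ∀ i, g i = (∑ j ∈ Finset.univ.filter (fun j => j < i), C i j • Vh j) +
                     ∑ j ∈ Finset.univ.filter (fun j => i < j), C i j • V j)
    (hy : ∀ i, y i = ‖g i‖) (hypos : ∀ i, 0 < y i)
    (hu : ∀ i, u i = -((y i)⁻¹ • g i))
    (hw : ∀ i, w i = ‖(1 + β) • u i - β • V i‖)
    (hVh : ∀ i, Vh i = (w i)⁻¹ • ((1 + β) • u i - β • V i))
    (Z : ℕ → Fin n → EuclideanSpace ℝ (Fin k))
    (hZ : ∀ t, ∀ j : Fin n, Z t j = if (j : ℕ) < t then Vh j else V j) :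
    (∀ t : ℕ, t < n → obj C (Z (t + 1)) ≤ obj C (Z t)) ∧
    (∀ t : ℕ, t ≤ n → obj C (Z t) ≤ obj C V) := by
  -- basic norm facts
  have hun : ∀ i, ‖u i‖ = 1 := by
    intro i
    rw [hu, norm_neg, norm_smul, norm_inv, Real.norm_eq_abs, ← hy,
      abs_of_pos (hypos i), inv_mul_cancel₀ (hypos i).ne']
  have hw1 : ∀ i, 1 ≤ w i := by
    intro i
    have h := norm_sub_norm_le ((1 + β) • u i) (β • V i)
    rw [norm_smul, norm_smul, Real.norm_eq_abs, Real.norm_eq_abs, hun, hV,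
      abs_of_nonneg (by linarith : (0:ℝ) ≤ 1 + β), abs_of_nonneg hβ0] at h
    rw [hw]; linarith
  have hwpos : ∀ i, 0 < w i := fun i => lt_of_lt_of_le one_pos (hw1 i)
  have hVhn : ∀ i, ‖Vh i‖ = 1 := by
    intro i
    rw [hVh, norm_smul, norm_inv, Real.norm_eq_abs, ← hw,
      abs_of_pos (hwpos i), inv_mul_cancel₀ (hwpos i).ne']
  -- key inequality
  have hkey : ∀ i, ⟪Vh i, g i⟫ ≤ ⟪V i, g i⟫ := by
    intro i
    set s : ℝ := ⟪V i, u i⟫ with hs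
    have hs1 : |s| ≤ 1 := by
      have := abs_real_inner_le_norm (V i) (u i)
      rwa [hV, hun, one_mul] at this
    have hs1' : s ≤ 1 := le_trans (le_abs_self s) hs1
    have hgu : g i = -(y i • u i) := by
      rw [hu]; simp [smul_smul, mul_inv_cancel₀ (hypos i).ne']
    have hig : ⟪V i, g i⟫ = -(y i * s) := by
      rw [hgu, inner_neg_right, real_inner_smul_right]
    have huu : ⟪u i, u i⟫ = 1 := by
      rw [real_inner_self_eq_norm_sq, hun]; norm_num
    have hug : ⟪u i, g i⟫ = -(y i) := by
      rw [hgu, inner_neg_right, real_inner_smul_right, huu, mul_one]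
    have hvg : ⟪Vh i, g i⟫ = (w i)⁻¹ * (-(y i) * (1 + β - β * s)) := by
      rw [hVh, real_inner_smul_left, inner_sub_left, real_inner_smul_left,
        real_inner_smul_left, hug, hig]
      ring
    have hw2 : (w i) ^ 2 = (1 + β) ^ 2 - 2 * (β * (1 + β) * s) + β ^ 2 := by
      have e : ⟪(1 + β) • u i, β • V i⟫ = β * (1 + β) * s := by
        rw [real_inner_smul_left, real_inner_smul_right, real_inner_comm (V i) (u i), ← hs]
        ring
      rw [hw, @norm_sub_sq_real, e, norm_smul, norm_smul, Real.norm_eq_abs,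
        Real.norm_eq_abs, hun, hV,
        abs_of_nonneg (by linarith : (0:ℝ) ≤ 1 + β), abs_of_nonneg hβ0]
      ring
    -- main scalar inequality : s * w i ≤ 1 + β - β * s
    have hmain : s * w i ≤ 1 + β - β * s := by
      rcases le_or_gt s 0 with h | h
      · have h1 : s * w i ≤ 0 := mul_nonpos_of_nonpos_of_nonneg h (hwpos i).le
        nlinarith
      · have ha : 0 < 1 + β - β * s := by nlinarith
        have hb : 0 < s * w i := mul_pos h (hwpos i)
        have hfac : 0 ≤ (1 - s ^ 2) * ((1 + β) * (1 + β - 2 * β * s)) := by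
          apply mul_nonneg (by nlinarith)
          apply mul_nonneg (by linarith)
          nlinarith
        have hid : (1 + β - β * s) ^ 2 - (s * w i) ^ 2
            = (1 - s ^ 2) * ((1 + β) * (1 + β - 2 * β * s)) := by
          linear_combination (-(s ^ 2)) * hw2
        nlinarith [hid, hfac, hb, ha]
    rw [hvg, hig]
    have hwinv : (0:ℝ) < (w i)⁻¹ := inv_pos.mpr (hwpos i)
    have hrw : -(y i * s) = (w i)⁻¹ * (-(y i) * (s * w i)) := by
      field_simp
      rw [mul_div_assoc, div_self (hwpos i).ne']
      ring
    rw [hrw]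
    apply mul_le_mul_of_nonneg_left _ hwinv.le
    nlinarith [mul_le_mul_of_nonneg_left hmain (hypos i).le]
  -- sum identity
  have hgsum : ∀ i₀ : Fin n,
      (∑ j ∈ Finset.univ.filter (fun j => j ≠ i₀), C i₀ j • (Z (i₀ : ℕ)) j) = g i₀ := by
    intro i₀
    rw [hg]
    rw [← Finset.sum_filter_add_sum_filter_not (Finset.univ.filter (fun j => j ≠ i₀))
      (fun j => j < i₀)]
    congr 1
    · apply Finset.sum_congr
      · ext j
        simp only [Finset.mem_filter, Finset.mem_univ, true_and, ne_eq, Fin.lt_def,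
          Fin.ext_iff]
        omega
      · intro j hj
        simp only [Finset.mem_filter, Finset.mem_univ, true_and, Fin.lt_def] at hj
        rw [hZ, if_pos hj]
    · apply Finset.sum_congr
      · ext j
        simp only [Finset.mem_filter, Finset.mem_univ, true_and, ne_eq, Fin.lt_def,
          Fin.ext_iff, not_lt]
        omega
      · intro j hj
        simp only [Finset.mem_filter, Finset.mem_univ, true_and, Fin.lt_def] at hj
        rw [hZ, if_neg (by omega)]
  -- part 1
  have part1 : ∀ t : ℕ, t < n → obj C (Z (t + 1)) ≤ obj C (Z t) := by
    intro t ht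
    set i₀ : Fin n := ⟨t, ht⟩ with hi₀
    have hXY : ∀ j, j ≠ i₀ → Z (t+1) j = Z t j := by
      intro j hj
      rw [hZ, hZ]
      have hne : (j:ℕ) ≠ t := fun h => hj (Fin.ext h)
      by_cases h : (j:ℕ) < t
      · simp [h, Nat.lt_succ_of_lt h]
      · have : ¬ ((j:ℕ) < t + 1) := by omega
        simp [h, this]
    have hXi : Z (t+1) i₀ = Vh i₀ := by rw [hZ]; simp [hi₀]
    have hYi : Z t i₀ = V i₀ := by rw [hZ]; simp [hi₀]
    have hnorm : ⟪Z (t+1) i₀, Z (t+1) i₀⟫ = ⟪Z t i₀, Z t i₀⟫ := by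
      rw [real_inner_self_eq_norm_sq, real_inner_self_eq_norm_sq, hXi, hYi, hVhn, hV]
    rw [obj_diff C hC (Z (t+1)) (Z t) i₀ hXY hnorm]
    have hsum : (∑ j ∈ Finset.univ.filter (fun j => j ≠ i₀), C i₀ j • (Z t) j) = g i₀ := by
      have := hgsum i₀
      simpa [hi₀] using this
    rw [hsum, hXi, hYi]
    have : ⟪Vh i₀ - V i₀, g i₀⟫ ≤ 0 := by
      rw [inner_sub_left]
      linarith [hkey i₀]
    linarith
  refine ⟨part1, ?_⟩
  have hZ0 : obj C (Z 0) = obj C V := by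
    congr 1
    funext j
    rw [hZ]; simp
  intro t ht
  induction t with
  | zero => rw [hZ0]
  | succ t ih =>
    exact le_trans (part1 t (by omega)) (ih (by omega))
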